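/- arXiv:2601.12394 — 4 statements merged into one kernel-verified Lean document; each statement's English description precedes it below -/
import Mathlib

section
/- For every real t with -1 < t < 1, the integral from 0 to 1 of (x^t - x^{-t})/(1+x) dx equals 1/t - π/sin(π t) (interpreting the expression as 0 when t = 0). -/
open Real

open Set MeasureTheory

private lemma intOn01 {a : ℝ} (ha : -1 < a) :
    IntegrableOn (fun x : ℝ => x ^ a / (1+x)) (Ioo 0 1) := by
  have hg : IntegrableOn (fun x : ℝ => x ^ a) (Ioo 0 1) :=
    ((intervalIntegral.intervalIntegrable_rpow' (a := 0) (b := 1) ha).1).mono_set Ioo_subset_Ioc_self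
  refine Integrable.mono hg (Measurable.aestronglyMeasurable (by fun_prop)) ?_
  rw [ae_restrict_iff' measurableSet_Ioo]
  filter_upwards with x hx
  have hx0 : (0:ℝ) < x := hx.1
  rw [Real.norm_eq_abs, Real.norm_eq_abs, abs_of_nonneg (by positivity),
    abs_of_nonneg (by positivity)]
  exact div_le_self (by positivity) (by linarith)

private lemma intOn1i {t : ℝ} (h0 : 0 < t) (h1 : t < 1) :
    IntegrableOn (fun y : ℝ => y ^ (t-1) / (1+y)) (Ioi 1) := by
  have hg : IntegrableOn (fun y : ℝ => y ^ (t-2)) (Ioi 1) :=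
    integrableOn_Ioi_rpow_of_lt (by linarith) one_pos
  refine Integrable.mono hg (Measurable.aestronglyMeasurable (by fun_prop)) ?_
  rw [ae_restrict_iff' measurableSet_Ioi]
  filter_upwards with x hx
  have hx1 : (1:ℝ) < x := hx
  have hx0 : (0:ℝ) < x := by linarith
  rw [Real.norm_eq_abs, Real.norm_eq_abs, abs_of_nonneg (by positivity),
    abs_of_nonneg (by positivity)]
  calc x ^ (t-1) / (1+x) ≤ x ^ (t-1) / x :=
        div_le_div_of_nonneg_left (by positivity) hx0 (by linarith)
    _ = x ^ (t-2) := by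
        rw [show t-1 = t-2+1 by ring, Real.rpow_add hx0, Real.rpow_one, mul_div_assoc,
          div_self (ne_of_gt hx0), mul_one]

private lemma beta_real (t : ℝ) (h0 : 0 < t) (h1 : t < 1) :
    ∫ x in Ioo (0:ℝ) 1, x ^ (t-1) * (1-x) ^ (-t) = π / Real.sin (π * t) := by
  have hs : (0:ℝ) < (t:ℂ).re := by simpa using h0
  have ht : (0:ℝ) < ((1:ℂ) - t).re := by simp [Complex.sub_re]; linarith
  have key := Complex.Gamma_mul_Gamma_eq_betaIntegral hs ht
  rw [show (t:ℂ) + (1 - t) = 1 by ring, Complex.Gamma_one, one_mul,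
    Complex.Gamma_mul_Gamma_one_sub] at key
  have hb : ((∫ x in Ioo (0:ℝ) 1, x ^ (t-1) * (1-x) ^ (-t) : ℝ) : ℂ)
      = Complex.betaIntegral t (1-t) := by
    rw [show ((∫ x in Ioo (0:ℝ) 1, x ^ (t-1) * (1-x) ^ (-t) : ℝ) : ℂ)
        = ∫ x in Ioo (0:ℝ) 1, ((x ^ (t-1) * (1-x) ^ (-t) : ℝ) : ℂ) from integral_ofReal.symm,
      Complex.betaIntegral,
      intervalIntegral.integral_of_le zero_le_one, MeasureTheory.integral_Ioc_eq_integral_Ioo]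
    refine setIntegral_congr_fun measurableSet_Ioo (fun x hx => ?_)
    obtain ⟨hx0, hx1⟩ := hx
    rw [Complex.ofReal_mul, Complex.ofReal_cpow hx0.le, Complex.ofReal_cpow (by linarith)]
    push_cast
    ring_nf
  have hcast : ((π / Real.sin (π * t) : ℝ) : ℂ) = ↑π / Complex.sin (↑π * t) := by
    push_cast [Complex.ofReal_sin]
    norm_num
  have := hb.trans key.symm
  rw [← hcast] at this
  exact_mod_cast this

private lemma mellin_eq (t : ℝ) (h0 : 0 < t) (h1 : t < 1) :
    ∫ y in Ioi (0:ℝ), y ^ (t-1) / (1+y) = π / Real.sin (π * t) := by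
  rw [← beta_real t h0 h1]
  have himg : (fun y : ℝ => y / (1+y)) '' Ioi 0 = Ioo 0 1 := by
    ext x
    constructor
    · rintro ⟨y, hy, rfl⟩
      have hy' : (0:ℝ) < y := hy
      constructor
      · positivity
      · rw [div_lt_one (by linarith)]; linarith
    · rintro ⟨hx0, hx1⟩
      have h1x : (1:ℝ) - x ≠ 0 := by linarith
      refine ⟨x / (1-x), div_pos hx0 (by linarith), ?_⟩
      have e : 1 + x/(1-x) = 1/(1-x) := by field_simp; ring
      show x/(1-x) / (1 + x/(1-x)) = x
      rw [e]; field_simp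
  have hderiv : ∀ y ∈ Ioi (0:ℝ), HasDerivWithinAt (fun y : ℝ => y / (1+y))
      (((1+y)^2)⁻¹) (Ioi 0) y := by
    intro y hy
    have h1y : (1:ℝ) + y ≠ 0 := by have : (0:ℝ) < y := hy; positivity
    have := (hasDerivAt_id y).div ((hasDerivAt_const y 1).add (hasDerivAt_id y)) h1y
    refine this.hasDerivWithinAt.congr_deriv ?_
    simp only [Pi.add_apply, id]
    ring
  have hinj : InjOn (fun y : ℝ => y / (1+y)) (Ioi 0) := by
    intro a ha b hb hab
    have ha' : (0:ℝ) < a := ha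
    have hb' : (0:ℝ) < b := hb
    field_simp at hab
    linarith
  have key := integral_image_eq_integral_abs_deriv_smul measurableSet_Ioi hderiv hinj
    (fun x => x ^ (t-1) * (1-x) ^ (-t))
  rw [himg] at key
  rw [key]
  refine setIntegral_congr_fun measurableSet_Ioi (fun y hy => ?_)
  have hy' : (0:ℝ) < y := hy
  have h1y : (0:ℝ) < 1 + y := by linarith
  have e1 : (1:ℝ) - y / (1+y) = (1+y)⁻¹ := by field_simp; ring
  have A : |((1+y)^2)⁻¹| = (1+y) ^ (-2:ℝ) := by
    rw [abs_of_pos (by positivity), ← Real.rpow_two, ← Real.rpow_neg h1y.le]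
  have B : ((1+y)⁻¹ : ℝ) ^ (-t) = (1+y) ^ t := by
    rw [Real.inv_rpow h1y.le, ← Real.rpow_neg h1y.le, neg_neg]
  rw [smul_eq_mul, e1, A, B, Real.div_rpow hy'.le h1y.le,
    div_eq_mul_inv (y ^ (t-1)) ((1+y) ^ (t-1)), ← Real.rpow_neg h1y.le,
    div_eq_mul_inv (y ^ (t-1)) (1+y), ← Real.rpow_neg_one (1+y),
    mul_assoc, ← Real.rpow_add h1y, ← mul_assoc, mul_comm ((1+y) ^ (-2:ℝ)),
    mul_assoc, ← Real.rpow_add h1y]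
  norm_num

private lemma inv_subst (t : ℝ) (h0 : 0 < t) (h1 : t < 1) :
    ∫ x in Ioo (0:ℝ) 1, x ^ (-t) / (1+x) = ∫ y in Ioi (1:ℝ), y ^ (t-1) / (1+y) := by
  have himg : (fun y : ℝ => y⁻¹) '' Ioi 1 = Ioo 0 1 := by
    ext x
    constructor
    · rintro ⟨y, hy, rfl⟩
      have hy' : (1:ℝ) < y := hy
      exact ⟨by positivity, by rw [inv_lt_one_iff₀]; right; exact hy'⟩
    · rintro ⟨hx0, hx1⟩
      have hinv : 1 < x⁻¹ := by
        have h := mul_inv_cancel₀ (ne_of_gt hx0)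
        nlinarith [inv_pos.mpr hx0]
      exact ⟨x⁻¹, hinv, inv_inv x⟩
  have hderiv : ∀ y ∈ Ioi (1:ℝ), HasDerivWithinAt (fun y : ℝ => y⁻¹)
      (-((y^2)⁻¹)) (Ioi 1) y := by
    intro y hy
    have : y ≠ 0 := by have : (1:ℝ) < y := hy; linarith
    exact (hasDerivAt_inv this).hasDerivWithinAt
  have hinj : InjOn (fun y : ℝ => y⁻¹) (Ioi 1) := by
    intro a ha b hb hab
    have : a⁻¹ = b⁻¹ := hab
    rwa [inv_inj] at this
  have key := integral_image_eq_integral_abs_deriv_smul measurableSet_Ioi hderiv hinj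
    (fun x => x ^ (-t) / (1+x))
  rw [himg] at key
  rw [key]
  refine setIntegral_congr_fun measurableSet_Ioi (fun y hy => ?_)
  have hy' : (1:ℝ) < y := hy
  have hy0 : (0:ℝ) < y := by linarith
  have h1y : (0:ℝ) < 1 + y := by linarith
  have e1 : (1:ℝ) + y⁻¹ = (1+y)/y := by field_simp; ring
  have B : (y⁻¹ : ℝ) ^ (-t) = y ^ t := by
    rw [Real.inv_rpow hy0.le, ← Real.rpow_neg hy0.le, neg_neg]
  have A : |(-((y^2)⁻¹))| = y ^ (-2:ℝ) := by
    rw [abs_neg, abs_of_pos (by positivity), ← Real.rpow_two, ← Real.rpow_neg hy0.le]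
  have C : y ^ (t-1) = y ^ (-2:ℝ) * y ^ t * y := by
    rw [show t-1 = -2 + t + 1 by ring, Real.rpow_add hy0, Real.rpow_add hy0, Real.rpow_one]
  rw [smul_eq_mul, e1, B, A, div_div_eq_mul_div, C]
  ring

private lemma main_pos (t : ℝ) (h0 : 0 < t) (h1 : t < 1) :
    ∫ x in (0:ℝ)..1, (x ^ t - x ^ (-t)) / (1 + x) = 1 / t - π / Real.sin (π * t) := by
  have hA : IntegrableOn (fun x : ℝ => x ^ t / (1+x)) (Ioo 0 1) := intOn01 (by linarith)
  have hB : IntegrableOn (fun x : ℝ => x ^ (-t) / (1+x)) (Ioo 0 1) := intOn01 (by linarith)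
  have hC : IntegrableOn (fun x : ℝ => x ^ (t-1) / (1+x)) (Ioo 0 1) := intOn01 (by linarith)
  have hD : IntegrableOn (fun y : ℝ => y ^ (t-1) / (1+y)) (Ioi 1) := intOn1i h0 h1
  -- split the Mellin integral
  have hsplit : (∫ x in Ioo (0:ℝ) 1, x ^ (t-1) / (1+x)) + (∫ y in Ioi (1:ℝ), y ^ (t-1) / (1+y))
      = π / Real.sin (π * t) := by
    have hdisj : Disjoint (Ioo (0:ℝ) 1) (Ici 1) :=
      Set.disjoint_left.mpr (fun x hx hx' => absurd hx.2 (not_lt.mpr hx'))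
    rw [← mellin_eq t h0 h1,
      show (∫ y in Ioi (1:ℝ), y ^ (t-1) / (1+y)) = ∫ y in Ici (1:ℝ), y ^ (t-1) / (1+y) from
        integral_Ici_eq_integral_Ioi.symm,
      ← setIntegral_union hdisj measurableSet_Ici hC (hD.congr_set_ae Ioi_ae_eq_Ici.symm),
      Ioo_union_Ici_eq_Ioi zero_lt_one]
  -- C + A = 1/t
  have hCA : (∫ x in Ioo (0:ℝ) 1, x ^ (t-1) / (1+x)) + (∫ x in Ioo (0:ℝ) 1, x ^ t / (1+x))
      = 1 / t := by
    rw [← integral_add hC hA]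
    have : ∫ x in Ioo (0:ℝ) 1, (x ^ (t-1) / (1+x) + x ^ t / (1+x)) ∂volume
        = ∫ x in Ioo (0:ℝ) 1, x ^ (t-1) ∂volume := by
      refine setIntegral_congr_fun measurableSet_Ioo (fun x hx => ?_)
      have hx0 : (0:ℝ) < x := hx.1
      have h1x : (0:ℝ) < 1 + x := by linarith
      have : x ^ t = x ^ (t-1) * x := by
        rw [show t = t-1+1 by ring]
        rw [Real.rpow_add hx0, Real.rpow_one]
        ring_nf
      rw [this]
      field_simp
    rw [this, ← MeasureTheory.integral_Ioc_eq_integral_Ioo,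
      ← intervalIntegral.integral_of_le zero_le_one,
      integral_rpow (Or.inl (by linarith))]
    rw [Real.one_rpow, Real.zero_rpow (by linarith : t - 1 + 1 ≠ 0)]
    norm_num
  have hBD := inv_subst t h0 h1
  -- assemble
  rw [intervalIntegral.integral_of_le zero_le_one, MeasureTheory.integral_Ioc_eq_integral_Ioo]
  have hsub : ∫ x in Ioo (0:ℝ) 1, (x ^ t - x ^ (-t)) / (1 + x)
      = (∫ x in Ioo (0:ℝ) 1, x ^ t / (1+x)) - ∫ x in Ioo (0:ℝ) 1, x ^ (-t) / (1+x) := by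
    rw [← integral_sub hA hB]
    refine setIntegral_congr_fun measurableSet_Ioo (fun x hx => ?_)
    rw [sub_div]
  rw [hsub, hBD]
  linarith

/-- For `t ∈ (-1,1)`, `∫_0^1 (x^t - x^{-t})/(1+x) dx = 1/t - π/sin(π t)`
(both sides are `0` when `t = 0`, by the `x⁻¹ = 0` convention for `x = 0`). -/
theorem integral_rpow_sub_rpow_div_one_add (t : ℝ) (ht : t ∈ Set.Ioo (-1 : ℝ) 1) :
    ∫ x in (0:ℝ)..1, (x ^ t - x ^ (-t)) / (1 + x) = 1 / t - π / Real.sin (π * t) := by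
  obtain ⟨ht1, ht2⟩ := ht
  rcases lt_trichotomy t 0 with hneg | hzero | hpos
  · have key := main_pos (-t) (by linarith) (by linarith)
    have hL : ∫ x in (0:ℝ)..1, (x ^ t - x ^ (-t)) / (1 + x)
        = -∫ x in (0:ℝ)..1, (x ^ (-t) - x ^ (-(-t))) / (1 + x) := by
      rw [← intervalIntegral.integral_neg]
      refine intervalIntegral.integral_congr (fun x _ => ?_)
      rw [neg_neg]
      ring
    rw [hL, key, mul_neg, Real.sin_neg]
    rw [div_neg, div_neg]
    ring
  · subst hzero
    simp
  · exact main_pos t hpos ht2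
end

section
/- Let g(t) = sinc(t) = sin(π t)/(π t). For every τ ∈ (0,1) and every odd integer n ≥ 3, the sum over all nonzero integers t of g(t - τ)^n equals (sin(π τ)/π)^n · (ζ*(n, τ) - ζ*(n, -τ) - 2/τ^n), where ζ*(n, q) = sum_{k=0}^{∞} (-1)^k/(k + q)^n is the alternating Hurwitz zeta function (with ζ*(n, -τ) interpreted as Σ_{k≥0} (-1)^k (k - τ)^{-n}). -/
open Real

/-- The normalized sinc pulse `g(t) = sin(π t)/(π t)`, `g(0) = 1`. -/
noncomputable def sincPulse (t : ℝ) : ℝ := if t = 0 then 1 else Real.sin (π * t) / (π * t)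

/-- Alternating Hurwitz zeta function at integer argument:
`ζ*(n, q) = ∑_{k≥0} (-1)^k/(k+q)^n`. -/
noncomputable def altHurwitzZetaNat (n : ℕ) (q : ℝ) : ℝ :=
  ∑' k : ℕ, (-1 : ℝ) ^ k / ((k : ℝ) + q) ^ n

theorem aux_summable (q : ℝ) (hq : 0 < q) (hq1 : q ≤ 1) (n : ℕ) (hn : 2 ≤ n) :
    Summable (fun k : ℕ => (-1:ℝ)^k/((k:ℝ)+q)^n) := by
  have h1 : Summable (fun k : ℕ => (1:ℝ)/((k:ℝ)+1)^n) := by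
    have := (Real.summable_one_div_nat_pow (p := n)).mpr hn
    have := (summable_nat_add_iff 1).mpr this
    simpa using this
  have h2 := h1.mul_left (1/q^n)
  refine Summable.of_abs (h2.of_nonneg_of_le (fun k => abs_nonneg _) (fun k => ?_))
  have hk : (0:ℝ) < (k:ℝ) + q := by positivity
  have hk1 : (0:ℝ) < (k:ℝ) + 1 := by positivity
  rw [abs_div, abs_pow, abs_neg, abs_one, one_pow, abs_of_pos (pow_pos hk n)]
  rw [div_mul_div_comm, one_mul]
  rw [div_le_div_iff₀ (pow_pos hk n) (by positivity)]
  calc 1 * (q^n * ((k:ℝ)+1)^n) = (q * ((k:ℝ)+1))^n := by rw [one_mul, mul_pow]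
    _ ≤ ((k:ℝ)+q)^n := by
        apply pow_le_pow_left₀ (by positivity)
        nlinarith
    _ ≤ 1 * ((k:ℝ)+q)^n := by rw [one_mul]

theorem sincPulse_neg (x : ℝ) : sincPulse (-x) = sincPulse x := by
  unfold sincPulse
  rcases eq_or_ne x 0 with rfl | hx
  · simp
  · rw [if_neg (neg_ne_zero.mpr hx), if_neg hx, mul_neg, Real.sin_neg, neg_div_neg_eq]

theorem sinc_pos_side (τ : ℝ) (h1 : τ < 1) (k : ℕ) :
    sincPulse (((k:ℝ)+1) - τ) = (-1)^k * Real.sin (π*τ) / (π*((k:ℝ)+1-τ)) := by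
  have hx : ((k:ℝ)+1) - τ ≠ 0 := by
    have hk : (0:ℝ) ≤ (k:ℝ) := Nat.cast_nonneg k
    intro h; nlinarith
  rw [sincPulse, if_neg hx]
  have harg : π * (((k:ℝ)+1) - τ) = ((k+1 : ℕ):ℝ) * π - π*τ := by push_cast; ring
  rw [harg, Real.sin_nat_mul_pi_sub, pow_succ]
  push_cast
  ring

theorem sinc_neg_side (τ : ℝ) (h0 : 0 < τ) (k : ℕ) :
    sincPulse (((k:ℝ)+1) + τ) = (-1)^(k+1) * Real.sin (π*τ) / (π*((k:ℝ)+1+τ)) := by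
  have hx : ((k:ℝ)+1) + τ ≠ 0 := by positivity
  rw [sincPulse, if_neg hx]
  have harg : π * (((k:ℝ)+1) + τ) = ((k+1 : ℕ):ℝ) * π - (-(π*τ)) := by push_cast; ring
  rw [harg, Real.sin_nat_mul_pi_sub, Real.sin_neg]
  push_cast
  ring

theorem pow_aux (m n : ℕ) (hodd : Odd n) (s x : ℝ) (hx : x ≠ 0) :
    ((-1:ℝ)^m * s / (π * x))^n = (s/π)^n * ((-1)^m / x^n) := by
  have hm : (((-1:ℝ)^m)^n) = (-1)^m := by
    rw [← pow_mul, mul_comm, pow_mul, hodd.neg_one_pow]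
  have hπ : (π : ℝ) ≠ 0 := Real.pi_ne_zero
  rw [div_pow, mul_pow, mul_pow, hm, div_pow]
  field_simp

/-- For `τ ∈ (0,1)` and odd `n ≥ 3`, the sum over nonzero integers of `g(t-τ)^n`
equals `(sin(π τ)/π)^n (ζ*(n,τ) - ζ*(n,-τ) - 2/τ^n)`. -/
theorem sum_sincPulse_pow_odd (τ : ℝ) (hτ : τ ∈ Set.Ioo (0:ℝ) 1)
    (n : ℕ) (hn : 3 ≤ n) (hodd : Odd n) :
    HasSum (fun t : {t : ℤ // t ≠ 0} => sincPulse ((t : ℤ) - τ) ^ n)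
      ((Real.sin (π * τ) / π) ^ n *
        (altHurwitzZetaNat n τ - altHurwitzZetaNat n (-τ) - 2 / τ ^ n)) := by
  obtain ⟨h0, h1⟩ := hτ
  have hτn : τ ^ n ≠ 0 := pow_ne_zero _ h0.ne'
  set C : ℝ := (Real.sin (π * τ) / π) ^ n with hC
  set F : ℤ → ℝ := fun t => if t = 0 then 0 else sincPulse ((t:ℝ) - τ)^n with hF
  set f₁ : ℕ → ℝ := fun k => (-1:ℝ)^k/((k:ℝ)+τ)^n with hf₁
  set f₂ : ℕ → ℝ := fun k => (-1:ℝ)^k/((k:ℝ)+(-τ))^n with hf₂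
  have hn2 : 2 ≤ n := by omega
  -- Summability / HasSum of the two zeta series
  have hs₁ : Summable f₁ := aux_summable τ h0 h1.le n hn2
  have h₁ : HasSum f₁ (altHurwitzZetaNat n τ) := by
    simpa only [altHurwitzZetaNat] using hs₁.hasSum
  have hs₂shift : Summable (fun k : ℕ => f₂ (k+1)) := by
    have := (aux_summable (1-τ) (by linarith) (by linarith) n hn2).neg
    refine this.congr fun k => ?_
    simp only [hf₂]
    push_cast
    rw [pow_succ, show ((k:ℝ)+1+-τ) = (k:ℝ) + (1-τ) by ring]
    ring
  have hs₂ : Summable f₂ := (summable_nat_add_iff 1).mp hs₂shift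
  have h₂ : HasSum f₂ (altHurwitzZetaNat n (-τ)) := by
    simpa only [altHurwitzZetaNat] using hs₂.hasSum
  -- shifted versions
  have hf₁0 : f₁ 0 = 1/τ^n := by simp [hf₁]
  have hf₂0 : f₂ 0 = -(1/τ^n) := by
    simp only [hf₂, pow_zero, Nat.cast_zero, zero_add, hodd.neg_pow]
    rw [div_neg]
  have h₁' : HasSum (fun m : ℕ => f₁ (m+1)) (altHurwitzZetaNat n τ - 1/τ^n) := by
    rw [hasSum_nat_add_iff 1]
    simpa [Finset.sum_range_one, hf₁0, sub_add_cancel] using h₁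
  have h₂' : HasSum (fun m : ℕ => f₂ (m+1)) (altHurwitzZetaNat n (-τ) + 1/τ^n) := by
    rw [hasSum_nat_add_iff 1]
    simpa [Finset.sum_range_one, hf₂0, sub_add_cancel] using h₂
  -- positive side of F
  have hxpos : ∀ m : ℕ, ((m:ℝ)+1-τ) ≠ 0 := fun m => by
    have hk : (0:ℝ) ≤ (m:ℝ) := Nat.cast_nonneg m
    intro h; nlinarith
  have hxneg : ∀ m : ℕ, ((m:ℝ)+1+τ) ≠ 0 := fun m => by positivity
  have hFpos : ∀ m : ℕ, F ((m:ℤ)+1) = C * (-(f₂ (m+1))) := by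
    intro m
    have hne : ((m:ℤ)+1) ≠ 0 := by omega
    simp only [hF, if_neg hne]
    push_cast
    rw [sinc_pos_side τ h1 m, pow_aux m n hodd _ _ (hxpos m)]
    simp only [hf₂, hC]
    push_cast
    rw [pow_succ]
    field_simp
    ring
  have hFneg : ∀ m : ℕ, F (-((m:ℤ)+1)) = C * (f₁ (m+1)) := by
    intro m
    have hne : (-((m:ℤ)+1)) ≠ 0 := by
      omega
    simp only [hF, if_neg hne]
    push_cast
    rw [show -((m:ℝ)+1) - τ = -(((m:ℝ)+1) + τ) by ring, sincPulse_neg,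
      sinc_neg_side τ h0 m, pow_aux (m+1) n hodd _ _ (hxneg m)]
    simp only [hf₁, hC]
    push_cast
    ring
  -- assemble
  have hApos : HasSum (fun m : ℕ => F ((m:ℤ)+1))
      (C * -(altHurwitzZetaNat n (-τ) + 1/τ^n)) :=
    ((h₂'.neg).mul_left C).congr_fun hFpos
  have hAposFull : HasSum (fun m : ℕ => F (m:ℤ))
      (C * -(altHurwitzZetaNat n (-τ) + 1/τ^n) + 0) := by
    have h := (hasSum_nat_add_iff (f := fun m : ℕ => F (m:ℤ)) 1).mp
      (hApos.congr_fun fun m => by norm_cast)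
    simpa [hF] using h
  have hBneg : HasSum (fun m : ℕ => F (-((m:ℤ)+1)))
      (C * (altHurwitzZetaNat n τ - 1/τ^n)) :=
    (h₁'.mul_left C).congr_fun hFneg
  have hFsum : HasSum F
      ((C * -(altHurwitzZetaNat n (-τ) + 1/τ^n) + 0) + C * (altHurwitzZetaNat n τ - 1/τ^n)) :=
    HasSum.of_nat_of_neg_add_one hAposFull (hBneg.congr_fun fun m => by norm_cast)
  have hsupp : Function.support F ⊆ {t : ℤ | t ≠ 0} := by
    intro t ht
    simp only [Function.mem_support, hF] at ht
    intro h
    exact ht (by simp [h])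
  have hsub : HasSum (fun t : {t : ℤ // t ≠ 0} => F t)
      ((C * -(altHurwitzZetaNat n (-τ) + 1/τ^n) + 0) + C * (altHurwitzZetaNat n τ - 1/τ^n)) :=
    (hasSum_subtype_iff_of_support_subset hsupp).mpr hFsum
  have heq : (fun t : {t : ℤ // t ≠ 0} => sincPulse ((t : ℤ) - τ) ^ n)
      = fun t : {t : ℤ // t ≠ 0} => F t := by
    funext t
    simp [hF, t.2]
  rw [heq]
  convert hsub using 1
  ring
end

section
/- Let (a_t)_{t ∈ ℤ \ {0}} be independent random variables, each taking value 1 with probability p and -1 with probability 1 - p, and let g(t) = sinc(t) with τ ∈ (0,1). Then the random series I = Σ_{t ≠ 0} a_t g(t - τ) converges almost surely. -/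
set_option maxHeartbeats 1600000

open MeasureTheory Filter Real ProbabilityTheory

private lemma int_sub_ne {τ : ℝ} (h0 : 0 < τ) (h1 : τ < 1) (t : ℤ) : (t:ℝ) - τ ≠ 0 := by
  intro h
  have ht : (t:ℝ) = τ := by linarith
  rcases le_or_gt t 0 with h' | h'
  · have : (t:ℝ) ≤ 0 := by exact_mod_cast h'
    linarith
  · have : (1:ℝ) ≤ (t:ℝ) := by exact_mod_cast h'
    linarith

private lemma sincPulse_eq {τ : ℝ} (h0 : 0 < τ) (h1 : τ < 1) (t : ℤ) :
    sincPulse ((t:ℝ) - τ) = -((-1:ℝ)^t * Real.sin (π * τ)) / (π * ((t:ℝ) - τ)) := by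
  rw [sincPulse, if_neg (int_sub_ne h0 h1 t),
    show π * ((t:ℝ) - τ) = (t:ℝ) * π - π * τ from by ring, Real.sin_int_mul_pi_sub,
    show (t:ℝ) * π - π * τ = π * ((t:ℝ) - τ) from by ring]

private lemma sincPulse_abs_le {τ : ℝ} (h0 : 0 < τ) (h1 : τ < 1) (t : ℤ) (ht : t ≠ 0) :
    |sincPulse ((t:ℝ) - τ)| ≤ 1 / ((1 - τ) * |(t:ℝ)|) := by
  rw [sincPulse_eq h0 h1 t, abs_div, abs_neg, abs_mul, abs_neg_one_zpow, one_mul]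
  have hsin : |Real.sin (π * τ)| ≤ 1 := Real.abs_sin_le_one _
  have htne : (t:ℝ) - τ ≠ 0 := int_sub_ne h0 h1 t
  have hdle : (1 - τ) * |(t:ℝ)| ≤ |π * ((t:ℝ) - τ)| := by
    rw [abs_mul, abs_of_pos Real.pi_pos]
    have hπ : (1:ℝ) ≤ π := by nlinarith [Real.pi_gt_three]
    have h2 : (1 - τ) * |(t:ℝ)| ≤ |(t:ℝ) - τ| := by
      rcases lt_or_ge t 0 with h' | h'
      · have ht1 : (t:ℝ) ≤ -1 := by exact_mod_cast (show t ≤ -1 by omega)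
        rw [abs_of_nonpos (by linarith : (t:ℝ) ≤ 0),
          abs_of_neg (by linarith : (t:ℝ) - τ < 0)]
        nlinarith
      · have ht1 : (1:ℝ) ≤ (t:ℝ) := by exact_mod_cast (show (1:ℤ) ≤ t by omega)
        rw [abs_of_pos (by linarith : (0:ℝ) < (t:ℝ)),
          abs_of_pos (by linarith : (0:ℝ) < (t:ℝ) - τ)]
        nlinarith
    nlinarith [abs_nonneg ((t:ℝ) - τ)]
  have hdpos : 0 < (1 - τ) * |(t:ℝ)| := by
    have : (t:ℝ) ≠ 0 := by exact_mod_cast ht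
    have := abs_pos.mpr this
    nlinarith
  exact div_le_div₀ (by norm_num) hsin hdpos hdle

private lemma sincPulse_pair_bound {τ : ℝ} (h0 : 0 < τ) (h1 : τ < 1) (t : ℤ) (ht : 1 ≤ t) :
    |sincPulse ((t:ℝ) - τ) + sincPulse ((((-t : ℤ)):ℝ) - τ)| ≤ (2 / (1 - τ)) * (1 / (t:ℝ)^2) := by
  rw [sincPulse_eq h0 h1 t, sincPulse_eq h0 h1 (-t)]
  have htr : (1:ℝ) ≤ (t:ℝ) := by exact_mod_cast ht
  have hzz : ((-1:ℝ)^(-t)) = (-1:ℝ)^t := by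
    rw [zpow_neg]
    refine inv_eq_of_mul_eq_one_right ?_
    rw [← mul_zpow]; norm_num
  have hπ : (0:ℝ) < π := Real.pi_pos
  have ha : (0:ℝ) < (t:ℝ) - τ := by linarith
  have hb : (0:ℝ) < (t:ℝ) + τ := by linarith
  have hc : ((-t:ℤ):ℝ) - τ = -((t:ℝ) + τ) := by push_cast; ring
  rw [hc, hzz]
  have key : -((-1:ℝ)^t * Real.sin (π * τ)) / (π * ((t:ℝ) - τ))
      + -((-1:ℝ)^t * Real.sin (π * τ)) / (π * (-((t:ℝ) + τ)))
      = ((-1:ℝ)^t * Real.sin (π * τ)) * (-(2*τ)) / (π * (((t:ℝ) - τ) * ((t:ℝ) + τ))) := by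
    have hane : (t:ℝ) - τ ≠ 0 := ne_of_gt ha
    have hbne : -((t:ℝ) + τ) ≠ 0 := by intro h; nlinarith
    have hπne : π ≠ 0 := ne_of_gt hπ
    have hd1 : π * ((t:ℝ) - τ) ≠ 0 := mul_ne_zero hπne hane
    have hd2 : π * (-((t:ℝ) + τ)) ≠ 0 := mul_ne_zero hπne hbne
    have hd3 : π * (((t:ℝ) - τ) * ((t:ℝ) + τ)) ≠ 0 :=
      mul_ne_zero hπne (mul_ne_zero hane (by intro h; nlinarith))
    rw [div_add_div _ _ hd1 hd2, div_eq_div_iff (mul_ne_zero hd1 hd2) hd3]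
    ring
  rw [key, abs_div, abs_mul, abs_mul, abs_neg_one_zpow, one_mul, abs_neg]
  have hsin : |Real.sin (π * τ)| ≤ 1 := Real.abs_sin_le_one _
  have h2τ : |2 * τ| = 2 * τ := abs_of_pos (by linarith)
  rw [h2τ]
  have ht2 : (1:ℝ) ≤ (t:ℝ)^2 := by nlinarith
  have hτt2 : τ * 1 ≤ τ * (t:ℝ)^2 := mul_le_mul_of_nonneg_left ht2 (le_of_lt h0)
  have hdenpos : (0:ℝ) < (1 - τ) * (t:ℝ)^2 := mul_pos (by linarith) (by nlinarith)
  have e3 : (1 - τ) * (t:ℝ)^2 ≤ ((t:ℝ) - τ) * ((t:ℝ) + τ) := by nlinarith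
  have e4 : ((t:ℝ) - τ) * ((t:ℝ) + τ) ≤ π * (((t:ℝ) - τ) * ((t:ℝ) + τ)) := by
    nlinarith [Real.pi_gt_three, mul_pos ha hb]
  have habs : |π * (((t:ℝ) - τ) * ((t:ℝ) + τ))| = π * (((t:ℝ) - τ) * ((t:ℝ) + τ)) :=
    abs_of_pos (by positivity)
  rw [habs, show (2 / (1 - τ)) * (1 / (t:ℝ)^2) = 2 / ((1 - τ) * (t:ℝ)^2) from by rw [div_mul_div_comm]; norm_num]
  have hnum : |Real.sin (π * τ)| * (2 * τ) ≤ 2 := by nlinarith [abs_nonneg (Real.sin (π * τ))]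
  exact div_le_div₀ (by norm_num) hnum hdenpos (by linarith)

private lemma sum_symm (f : ℤ → ℝ) (N : ℕ) :
    ∑ t ∈ (Finset.Icc (-(N:ℤ)) (N:ℤ)).erase 0, f t
      = ∑ k ∈ Finset.range N, (f ((k:ℤ)+1) + f (-((k:ℤ)+1))) := by
  induction N with
  | zero => simp
  | succ n ih =>
      have hcast : ((n+1:ℕ):ℤ) = (n:ℤ)+1 := by push_cast; ring
      have hins : (Finset.Icc (-((n:ℤ)+1)) ((n:ℤ)+1)).erase 0
          = insert ((n:ℤ)+1) (insert (-((n:ℤ)+1)) ((Finset.Icc (-(n:ℤ)) (n:ℤ)).erase 0)) := by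
        ext t
        simp only [Finset.mem_erase, Finset.mem_Icc, Finset.mem_insert]
        omega
      have h1 : ((n:ℤ)+1) ∉ insert (-((n:ℤ)+1)) ((Finset.Icc (-(n:ℤ)) (n:ℤ)).erase 0) := by
        simp only [Finset.mem_insert, Finset.mem_erase, Finset.mem_Icc]
        omega
      have h2 : (-((n:ℤ)+1)) ∉ (Finset.Icc (-(n:ℤ)) (n:ℤ)).erase 0 := by
        simp only [Finset.mem_erase, Finset.mem_Icc]
        omega
      rw [hcast, hins, Finset.sum_insert h1, Finset.sum_insert h2, ih, Finset.sum_range_succ]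
      ring

private noncomputable def Efin (n : ℕ) : Finset ℤ := (Finset.Icc (-(n:ℤ)) (n:ℤ)).erase 0

private lemma mem_Efin {n : ℕ} {t : ℤ} : t ∈ Efin n ↔ t ≠ 0 ∧ -(n:ℤ) ≤ t ∧ t ≤ n := by
  simp [Efin, Finset.mem_erase, Finset.mem_Icc, and_assoc]

private lemma Efin_ne {n : ℕ} {t : ℤ} (h : t ∈ Efin n) : t ≠ 0 := (mem_Efin.1 h).1

private lemma Efin_mono : Monotone Efin := by
  intro n n' h t ht
  rw [mem_Efin] at *
  omega

private lemma Efin_succ (n : ℕ) :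
    Efin (n+1) = insert ((n:ℤ)+1) (insert (-((n:ℤ)+1)) (Efin n)) := by
  ext t
  simp only [mem_Efin, Finset.mem_insert]
  omega

private lemma Efin_not_mem₁ (n : ℕ) : ((n:ℤ)+1) ∉ insert (-((n:ℤ)+1)) (Efin n) := by
  simp only [Finset.mem_insert, mem_Efin]
  omega

private lemma Efin_not_mem₂ (n : ℕ) : (-((n:ℤ)+1)) ∉ Efin n := by
  simp only [mem_Efin]
  omega

private lemma sum_Efin (f : ℤ → ℝ) (N : ℕ) :
    ∑ t ∈ Efin N, f t = ∑ k ∈ Finset.range N, (f ((k:ℤ)+1) + f (-((k:ℤ)+1))) := by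
  induction N with
  | zero => simp [Efin]
  | succ n ih =>
      rw [Efin_succ, Finset.sum_insert (Efin_not_mem₁ n), Finset.sum_insert (Efin_not_mem₂ n),
        ih, Finset.sum_range_succ]
      ring

/-- Kolmogorov three-series application: with `(a_t)_{t ∈ ℤ \ {0}}` i.i.d. `±1`-valued
(`P(a_t = 1) = p`) and `τ ∈ (0,1)`, the random series `∑_{t ≠ 0} a_t g(t-τ)`
converges almost surely (as a symmetric sum). -/
theorem isi_series_converges_ae (Ω : Type*) [MeasurableSpace Ω] (μ : Measure Ω)
    [IsProbabilityMeasure μ] (a : ℤ → Ω → ℝ) (ha : ∀ t, Measurable (a t))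
    (hval : ∀ t ω, a t ω = 1 ∨ a t ω = -1)
    (p : ℝ) (hp : p ∈ Set.Icc (0:ℝ) 1)
    (hprob : ∀ t : ℤ, t ≠ 0 → μ {ω | a t ω = 1} = ENNReal.ofReal p)
    (hindep : iIndepFun
      (fun t : {t : ℤ // t ≠ 0} => a t.1) μ)
    (τ : ℝ) (hτ : τ ∈ Set.Ioo (0:ℝ) 1) :
    ∀ᵐ ω ∂μ, ∃ L : ℝ, Tendsto
      (fun N : ℕ => ∑ t ∈ (Finset.Icc (-(N:ℤ)) (N:ℤ)).erase 0, a t ω * sincPulse ((t : ℝ) - τ))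
      atTop (nhds L) := by
  classical
  obtain ⟨hτ0, hτ1⟩ := hτ
  obtain ⟨hp0, hp1⟩ := hp
  set g : ℤ → ℝ := fun t => sincPulse ((t:ℝ) - τ) with hgdef
  set mm : ℝ := 2 * p - 1 with hmmdef
  set X : ℤ → Ω → ℝ := fun t ω => (a t ω - mm) * g t with hXdef
  -- boundedness of the random variables
  have habs_a : ∀ t ω, |a t ω| ≤ 1 := by
    intro t ω
    rcases hval t ω with h | h <;> rw [h] <;> norm_num
  have habs_m : |mm| ≤ 1 := by
    rw [hmmdef, abs_le]; constructor <;> linarith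
  have hXbdd : ∀ t ω, ‖X t ω‖ ≤ 2 * |g t| := by
    intro t ω
    rw [hXdef]
    simp only [Real.norm_eq_abs, abs_mul]
    have h1 : |a t ω - mm| ≤ 2 := (abs_sub (a t ω) mm).trans (by
      have := habs_a t ω; have := habs_m; linarith)
    nlinarith [abs_nonneg (g t), abs_nonneg (a t ω - mm)]
  have hXmeas : ∀ t, Measurable (X t) := fun t => ((ha t).sub measurable_const).mul_const _
  have hXmem2 : ∀ t, MemLp (X t) 2 μ := fun t =>
    (memLp_top_of_bound (hXmeas t).aestronglyMeasurable _
      (Filter.Eventually.of_forall (hXbdd t))).mono_exponent le_top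
  have hXint : ∀ t, Integrable (X t) μ := fun t =>
    memLp_one_iff_integrable.1 ((hXmem2 t).mono_exponent one_le_two)
  have haint : ∀ t, Integrable (a t) μ := by
    intro t
    refine memLp_one_iff_integrable.1
      ((memLp_top_of_bound (ha t).aestronglyMeasurable 1
        (Filter.Eventually.of_forall ?_)).mono_exponent le_top)
    intro ω
    rw [Real.norm_eq_abs]
    exact habs_a t ω
  -- expectation of a t
  have hamean : ∀ t : ℤ, t ≠ 0 → ∫ ω, a t ω ∂μ = mm := by
    intro t ht
    have hAmeas : MeasurableSet {ω | a t ω = 1} := (ha t) (measurableSet_singleton 1)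
    have hrepr : a t = fun ω => 2 * Set.indicator {ω | a t ω = 1} (fun _ => (1:ℝ)) ω - 1 := by
      funext ω
      rcases hval t ω with h | h
      · rw [h, Set.indicator_of_mem (by exact h)]; norm_num
      · rw [h, Set.indicator_of_notMem (by
          intro hmem
          rw [Set.mem_setOf_eq] at hmem
          rw [hmem] at h
          norm_num at h)]
        norm_num
    rw [hrepr]
    have hind : Integrable (Set.indicator {ω | a t ω = 1} (fun _ => (1:ℝ))) μ := by
      refine (integrable_indicator_iff hAmeas).2 ?_
      exact integrableOn_const (measure_ne_top μ _)
    rw [integral_sub ((hind.const_mul 2)) (integrable_const 1), integral_const_mul,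
      integral_indicator_const _ hAmeas, integral_const]
    simp [Measure.real, hprob t ht, ENNReal.toReal_ofReal hp0, hmmdef]
  have hXmean : ∀ t : ℤ, t ≠ 0 → ∫ ω, X t ω ∂μ = 0 := by
    intro t ht
    rw [hXdef]
    simp only
    rw [integral_mul_const, integral_sub (haint t) (integrable_const mm), hamean t ht,
      integral_const]
    simp
  -- the filtration
  let F : ℕ → MeasurableSpace Ω := fun n =>
    ⨆ i ∈ {i : {t : ℤ // t ≠ 0} | (i : ℤ) ∈ Efin n}, MeasurableSpace.comap (a i.1) inferInstance
  have hFle : ∀ n, F n ≤ ‹MeasurableSpace Ω› := fun n =>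
    iSup₂_le fun i _ => measurable_iff_comap_le.1 (ha i.1)
  have hFmono : Monotone F := by
    intro n n' h
    refine iSup_mono fun i => ?_
    exact iSup_le fun hi => le_iSup_of_le (Efin_mono h hi) le_rfl
  let ℱ : Filtration ℕ ‹MeasurableSpace Ω› := ⟨F, hFmono, hFle⟩
  have hcomap_le : ∀ n, ∀ t (htm : t ∈ Efin n),
      MeasurableSpace.comap (a t) inferInstance ≤ F n := by
    intro n t htm
    exact le_iSup₂ (f := fun (i : {t : ℤ // t ≠ 0})
      (_ : i ∈ {i : {t : ℤ // t ≠ 0} | (i : ℤ) ∈ Efin n}) =>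
      MeasurableSpace.comap (a i.1) inferInstance) ⟨t, Efin_ne htm⟩ htm
  have hXmeasF : ∀ n, ∀ t ∈ Efin n, Measurable[F n] (X t) := by
    intro n t htm
    have h1 : Measurable[F n] (a t) := measurable_iff_comap_le.2 (hcomap_le n t htm)
    exact (h1.sub measurable_const).mul_const _
  set M : ℕ → Ω → ℝ := fun n ω => ∑ t ∈ Efin n, X t ω with hMdef
  have hadp : StronglyAdapted ℱ M := by
    intro n
    exact Measurable.stronglyMeasurable (Finset.measurable_sum _ fun t htm => hXmeasF n t htm)
  have hMint : ∀ n, Integrable (M n) μ := fun n => integrable_finset_sum _ fun t _ => hXint t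
  -- the martingale property
  have hmart : Martingale M ℱ μ := by
    refine martingale_nat hadp hMint fun n => ?_
    have hsplit : M (n+1) = M n + fun ω => (X ((n:ℤ)+1) ω + X (-((n:ℤ)+1)) ω) := by
      funext ω
      show ∑ t ∈ Efin (n+1), X t ω = _
      rw [Efin_succ, Finset.sum_insert (Efin_not_mem₁ n), Finset.sum_insert (Efin_not_mem₂ n)]
      show _ = M n ω + (X ((n:ℤ)+1) ω + X (-((n:ℤ)+1)) ω)
      ring
    set D : Ω → ℝ := fun ω => X ((n:ℤ)+1) ω + X (-((n:ℤ)+1)) ω with hDdef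
    have hDint : Integrable D μ := (hXint _).add (hXint _)
    have hcondM : μ[M n | ℱ n] = M n :=
      condExp_of_stronglyMeasurable (ℱ.le n) (hadp n) (hMint n)
    -- independence of the increment from the past
    set S : Set {t : ℤ // t ≠ 0} := {i | (i : ℤ) = (n:ℤ)+1 ∨ (i : ℤ) = -((n:ℤ)+1)} with hSdef
    have hST : Disjoint S {i : {t : ℤ // t ≠ 0} | (i : ℤ) ∈ Efin n} := by
      rw [Set.disjoint_left]
      rintro i hiS hiT
      rw [hSdef, Set.mem_setOf_eq] at hiS
      rw [Set.mem_setOf_eq, mem_Efin] at hiT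
      omega
    have hindep2 := indep_iSup_of_disjoint (m := fun i : {t : ℤ // t ≠ 0} =>
        MeasurableSpace.comap (a i.1) inferInstance)
      (fun i => measurable_iff_comap_le.1 (ha i.1)) hindep.iIndep hST
    have hm1le : MeasurableSpace.comap (a ((n:ℤ)+1)) inferInstance ≤
        ⨆ i ∈ S, MeasurableSpace.comap (a i.1) inferInstance :=
      le_iSup₂ (f := fun (i : {t : ℤ // t ≠ 0}) (_ : i ∈ S) =>
        MeasurableSpace.comap (a i.1) inferInstance) ⟨(n:ℤ)+1, by omega⟩ (Or.inl rfl)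
    have hm2le : MeasurableSpace.comap (a (-((n:ℤ)+1))) inferInstance ≤
        ⨆ i ∈ S, MeasurableSpace.comap (a i.1) inferInstance :=
      le_iSup₂ (f := fun (i : {t : ℤ // t ≠ 0}) (_ : i ∈ S) =>
        MeasurableSpace.comap (a i.1) inferInstance) ⟨-((n:ℤ)+1), by omega⟩ (Or.inr rfl)
    have hDmeas : StronglyMeasurable[⨆ i ∈ S, MeasurableSpace.comap (a i.1) inferInstance] D := by
      apply Measurable.stronglyMeasurable
      have h1 := measurable_iff_comap_le.2 hm1le
      have h2 := measurable_iff_comap_le.2 hm2le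
      exact ((h1.sub measurable_const).mul_const _).add ((h2.sub measurable_const).mul_const _)
    have hle₁ : (⨆ i ∈ S, MeasurableSpace.comap (a i.1) inferInstance)
        ≤ ‹MeasurableSpace Ω› := iSup₂_le fun i _ => measurable_iff_comap_le.1 (ha i.1)
    have hcondD : μ[D | ℱ n] =ᵐ[μ] fun _ => μ[D] :=
      condExp_indep_eq hle₁ (ℱ.le n) hDmeas hindep2
    have hDzero : μ[D] = 0 := by
      rw [hDdef]
      show ∫ ω, (X ((n:ℤ)+1) ω + X (-((n:ℤ)+1)) ω) ∂μ = 0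
      rw [integral_add (hXint _) (hXint _), hXmean _ (by omega), hXmean _ (by omega)]
      ring
    have h3 : μ[M (n+1) | ℱ n] =ᵐ[μ] M n := by
      rw [hsplit]
      refine (condExp_add (hMint n) hDint _).trans ?_
      rw [hcondM]
      have h4 : M n + μ[D | ℱ n] =ᵐ[μ] M n + fun _ => μ[D] :=
        EventuallyEq.add EventuallyEq.rfl hcondD
      refine h4.trans ?_
      rw [hDzero]
      filter_upwards with ω
      simp
    exact h3.symm
  -- summability bounds
  have h1τ : (0:ℝ) < 1 - τ := by linarith
  have hgabs : ∀ t : ℤ, t ≠ 0 → |g t| ≤ 1 / ((1 - τ) * |(t:ℝ)|) := fun t ht =>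
    sincPulse_abs_le hτ0 hτ1 t ht
  have hb2 : Summable (fun k : ℕ => 1 / ((k:ℝ)+1)^2) := by
    have h := (summable_nat_add_iff (f := fun n : ℕ => 1 / (n:ℝ)^2) 1).2
      (Real.summable_one_div_nat_pow.2 one_lt_two)
    refine h.congr fun n => ?_
    push_cast
    ring
  have hsq : ∀ k : ℕ, g ((k:ℤ)+1)^2 + g (-((k:ℤ)+1))^2
      ≤ (2/(1-τ)^2) * (1/((k:ℝ)+1)^2) := by
    intro k
    have hk1 : (0:ℝ) < (k:ℝ)+1 := by positivity
    have e1 : |g ((k:ℤ)+1)| ≤ 1 / ((1-τ) * ((k:ℝ)+1)) := by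
      have h := hgabs ((k:ℤ)+1) (by omega)
      push_cast at h
      rwa [abs_of_pos hk1] at h
    have e2 : |g (-((k:ℤ)+1))| ≤ 1 / ((1-τ) * ((k:ℝ)+1)) := by
      have h := hgabs (-((k:ℤ)+1)) (by omega)
      push_cast at h
      rwa [abs_neg, abs_of_pos hk1] at h
    have f1 : g ((k:ℤ)+1)^2 ≤ (1 / ((1-τ) * ((k:ℝ)+1)))^2 := by
      rw [← sq_abs]
      exact pow_le_pow_left₀ (abs_nonneg _) e1 2
    have f2 : g (-((k:ℤ)+1))^2 ≤ (1 / ((1-τ) * ((k:ℝ)+1)))^2 := by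
      rw [← sq_abs]
      exact pow_le_pow_left₀ (abs_nonneg _) e2 2
    have heq : (1 / ((1-τ) * ((k:ℝ)+1)))^2 + (1 / ((1-τ) * ((k:ℝ)+1)))^2
        = (2/(1-τ)^2) * (1/((k:ℝ)+1)^2) := by
      field_simp
      ring
    linarith
  have hBsum : Summable (fun k : ℕ => (2/(1-τ)^2) * (1/((k:ℝ)+1)^2)) := hb2.mul_left _
  set B : ℝ := ∑' k : ℕ, (2/(1-τ)^2) * (1/((k:ℝ)+1)^2) with hBdef
  have hBnn : 0 ≤ B := tsum_nonneg fun k => by positivity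
  have hEsq : ∀ n, ∑ t ∈ Efin n, g t^2 ≤ B := by
    intro n
    rw [sum_Efin (fun t => g t^2) n]
    calc ∑ k ∈ Finset.range n, (g ((k:ℤ)+1)^2 + g (-((k:ℤ)+1))^2)
        ≤ ∑ k ∈ Finset.range n, (2/(1-τ)^2) * (1/((k:ℝ)+1)^2) :=
          Finset.sum_le_sum fun k _ => hsq k
      _ ≤ B := Summable.sum_le_tsum _ (fun k _ => by positivity) hBsum
  -- pairwise independence and variance bound
  have hpairI : ∀ n, Set.Pairwise ↑(Efin n) (fun s t => IndepFun (X s) (X t) μ) := by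
    intro n s hs t ht hst
    have hsne : s ≠ 0 := Efin_ne (Finset.mem_coe.1 hs)
    have htne : t ≠ 0 := Efin_ne (Finset.mem_coe.1 ht)
    have hij : (⟨s, hsne⟩ : {t : ℤ // t ≠ 0}) ≠ ⟨t, htne⟩ := by
      simp only [ne_eq, Subtype.mk.injEq]
      exact hst
    have hind := hindep.indepFun hij
    exact hind.comp (φ := fun x : ℝ => (x - mm) * g s) (ψ := fun x : ℝ => (x - mm) * g t)
      ((measurable_id.sub measurable_const).mul_const _)
      ((measurable_id.sub measurable_const).mul_const _)
  have hMfun : ∀ n, M n = ∑ t ∈ Efin n, X t := by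
    intro n
    funext ω
    rw [hMdef]
    simp [Finset.sum_apply]
  have hXvar : ∀ t : ℤ, t ≠ 0 → variance (X t) μ ≤ 4 * g t^2 := by
    intro t ht
    refine (variance_le_expectation_sq (hXmeas t).aestronglyMeasurable).trans ?_
    have hpt : X t ^ 2 ≤ fun _ω : Ω => 4 * g t^2 := by
      intro ω
      show (X t ^ 2) ω ≤ 4 * g t ^ 2
      have h2 : |X t ω| ≤ 2 * |g t| := by
        have := hXbdd t ω
        rwa [Real.norm_eq_abs] at this
      have h3 : |X t ω|^2 ≤ (2 * |g t|)^2 := pow_le_pow_left₀ (abs_nonneg _) h2 2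
      have h4 : (X t ^ 2) ω = X t ω ^ 2 := rfl
      rw [h4, ← sq_abs]
      calc |X t ω|^2 ≤ (2 * |g t|)^2 := h3
        _ = 4 * g t^2 := by rw [mul_pow, sq_abs]; norm_num
    have hint2 : Integrable (X t ^ 2) μ := (hXmem2 t).integrable_sq
    calc μ[X t ^ 2] ≤ ∫ _ω, 4 * g t^2 ∂μ :=
          integral_mono (f := X t ^ 2) (g := fun _ω : Ω => 4 * g t ^ 2) hint2
            (integrable_const _) hpt
      _ = 4 * g t^2 := by simp
  have hvar : ∀ n, variance (M n) μ ≤ 4 * B := by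
    intro n
    rw [hMfun n, IndepFun.variance_sum (fun t _ => hXmem2 t) (hpairI n)]
    calc ∑ t ∈ Efin n, variance (X t) μ ≤ ∑ t ∈ Efin n, 4 * g t^2 :=
          Finset.sum_le_sum fun t htm => hXvar t (Efin_ne htm)
      _ = 4 * ∑ t ∈ Efin n, g t^2 := by rw [Finset.mul_sum]
      _ ≤ 4 * B := by linarith [hEsq n]
  have hMmean : ∀ n, μ[M n] = 0 := by
    intro n
    rw [hMdef]
    show ∫ ω, ∑ t ∈ Efin n, X t ω ∂μ = 0
    rw [integral_finset_sum _ fun t _ => hXint t]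
    exact Finset.sum_eq_zero fun t htm => hXmean t (Efin_ne htm)
  have hMmem2 : ∀ n, MemLp (M n) 2 μ := by
    intro n
    rw [hMfun n]
    exact memLp_finset_sum' _ fun t _ => hXmem2 t
  -- L¹ boundedness
  set R : NNReal := (4*B).toNNReal ^ (1/2 : ℝ) with hRdef
  have hbdd : ∀ n, eLpNorm (M n) 1 μ ≤ (R : ENNReal) := by
    intro n
    have h1 : eLpNorm (M n) 1 μ ≤ eLpNorm (M n) 2 μ :=
      eLpNorm_le_eLpNorm_of_exponent_le one_le_two (hMmem2 n).aestronglyMeasurable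
    have h2 : eLpNorm (M n) 2 μ = (evariance (M n) μ) ^ (1/2 : ℝ) := by
      rw [eLpNorm_eq_lintegral_rpow_enorm_toReal two_ne_zero ENNReal.ofNat_ne_top]
      unfold ProbabilityTheory.evariance
      rw [hMmean n]
      simp only [sub_zero, ENNReal.toReal_ofNat, ENNReal.rpow_two]
    have h3 : evariance (M n) μ ≤ ENNReal.ofReal (4*B) := by
      rw [← (hMmem2 n).ofReal_variance_eq]
      exact ENNReal.ofReal_le_ofReal (hvar n)
    calc eLpNorm (M n) 1 μ ≤ eLpNorm (M n) 2 μ := h1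
      _ = (evariance (M n) μ) ^ (1/2 : ℝ) := h2
      _ ≤ (ENNReal.ofReal (4*B)) ^ (1/2 : ℝ) := ENNReal.rpow_le_rpow h3 (by norm_num)
      _ = (R : ENNReal) := by
        rw [hRdef, ENNReal.coe_rpow_of_nonneg _ (by norm_num : (0:ℝ) ≤ 1/2)]
        rfl
  have hconv := hmart.submartingale.exists_ae_tendsto_of_bdd hbdd
  -- deterministic part
  have hsumh : Summable (fun k : ℕ => g ((k:ℤ)+1) + g (-((k:ℤ)+1))) := by
    refine Summable.of_norm_bounded
      (hb2.mul_left (2/(1-τ))) fun k => ?_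
    have h := sincPulse_pair_bound hτ0 hτ1 ((k:ℤ)+1) (by omega)
    rw [Real.norm_eq_abs]
    simp only [hgdef]
    push_cast at h ⊢
    exact h
  set T : ℝ := ∑' k : ℕ, (g ((k:ℤ)+1) + g (-((k:ℤ)+1))) with hTdef
  have hdet : Tendsto (fun N : ℕ => ∑ t ∈ Efin N, g t) atTop (nhds T) := by
    have h := hsumh.hasSum.tendsto_sum_nat
    have heq : (fun N : ℕ => ∑ t ∈ Efin N, g t)
        = fun N => ∑ k ∈ Finset.range N, (g ((k:ℤ)+1) + g (-((k:ℤ)+1))) := by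
      funext N
      exact sum_Efin g N
    rw [heq]
    exact h
  -- conclusion
  filter_upwards [hconv] with ω hc
  obtain ⟨c, hc⟩ := hc
  refine ⟨c + mm * T, ?_⟩
  have hfinal : (fun N : ℕ => ∑ t ∈ (Finset.Icc (-(N:ℤ)) (N:ℤ)).erase 0,
        a t ω * sincPulse ((t:ℝ) - τ))
      = fun N => M N ω + mm * ∑ t ∈ Efin N, g t := by
    funext N
    show ∑ t ∈ Efin N, a t ω * g t = M N ω + mm * ∑ t ∈ Efin N, g t
    rw [hMdef]
    simp only [Finset.mul_sum]
    rw [← Finset.sum_add_distrib]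
    refine Finset.sum_congr rfl fun t _ => ?_
    rw [hXdef]
    ring
  rw [hfinal]
  exact hc.add (hdet.const_mul mm)
end

section
/- Let I be a bounded real random variable with mean μ and central moments μ_j, and let g, σ > 0. Then E[Q((g - I)/σ)] = 1/2 - (1/(√(2π) σ)) Σ_{n=0}^{∞} Σ_{k=0}^{2n+1} Σ_{j=0}^{k} (2n-1)!! · g^{2n+1-k} (-1)^{n+k} μ_j μ^{k-j} / (σ^{2n} (2n+1-k)! j! (k-j)!), where the triple series converges and (2n-1)!! denotes the double factorial with (-1)!! = 1. -/
open Real MeasureTheory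

/-- The Gaussian tail function `Q(x) = (1/√(2π)) ∫_x^∞ e^{-t²/2} dt`. -/
noncomputable def gaussQ (x : ℝ) : ℝ :=
  (Real.sqrt (2 * π))⁻¹ * ∫ t in Set.Ioi x, Real.exp (-t ^ 2 / 2)

lemma exp_neg_sq_series (t : ℝ) :
    Real.exp (-t ^ 2 / 2) = ∑' n : ℕ, (-1 : ℝ) ^ n * t ^ (2 * n) / (2 ^ n * n.factorial) := by
  rw [Real.exp_eq_exp_ℝ, NormedSpace.exp_eq_tsum_div]
  refine tsum_congr fun n => ?_
  rw [show (-t ^ 2 / 2 : ℝ) = (-1) * (t ^ 2 / 2) by ring, mul_pow, div_pow, ← pow_mul]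
  ring

lemma integrable_exp_half : Integrable (fun t : ℝ => Real.exp (-t ^ 2 / 2)) := by
  have h : (fun t : ℝ => Real.exp (-t ^ 2 / 2)) = fun t => Real.exp (-(1/2 : ℝ) * t ^ 2) := by
    funext t; ring_nf
  rw [h]
  exact integrable_exp_neg_mul_sq (by norm_num)

lemma integral_exp_half : ∫ t : ℝ, Real.exp (-t ^ 2 / 2) = Real.sqrt (2 * π) := by
  have h : (fun t : ℝ => Real.exp (-t ^ 2 / 2)) = fun t => Real.exp (-(1/2 : ℝ) * t ^ 2) := by
    funext t; ring_nf
  rw [h, integral_gaussian]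
  norm_num [mul_comm]

lemma integral_exp_half_Ioi :
    ∫ t in Set.Ioi (0:ℝ), Real.exp (-t ^ 2 / 2) = Real.sqrt (2 * π) / 2 := by
  have h : ∀ t : ℝ, Real.exp (-t ^ 2 / 2) = Real.exp (-(1/2 : ℝ) * t ^ 2) := by
    intro t; ring_nf
  simp_rw [h]
  rw [integral_gaussian_Ioi]
  congr 1
  norm_num [mul_comm]

lemma integral_exp_half_Iic :
    ∫ t in Set.Iic (0:ℝ), Real.exp (-t ^ 2 / 2) = Real.sqrt (2 * π) / 2 := by
  have h := intervalIntegral.integral_Iic_add_Ioi (b := (0:ℝ)) (f := fun t => Real.exp (-t ^ 2 / 2))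
    integrable_exp_half.integrableOn integrable_exp_half.integrableOn
  rw [integral_exp_half_Ioi, integral_exp_half] at h
  linarith

lemma swap_aux (a b : ℝ) (hab : a ≤ b) :
    ∫ t in Set.Ioc a b, ∑' n : ℕ, (-1 : ℝ) ^ n * t ^ (2 * n) / (2 ^ n * n.factorial) =
    ∑' n : ℕ, ∫ t in Set.Ioc a b, (-1 : ℝ) ^ n * t ^ (2 * n) / (2 ^ n * n.factorial) := by
  set K : ℝ := max (a ^ 2) (b ^ 2) with hK
  have hK0 : 0 ≤ K := le_max_of_le_left (sq_nonneg a)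
  have hsq : ∀ t ∈ Set.Ioc a b, t ^ 2 ≤ K := by
    intro t ht
    rcases le_total t 0 with h | h
    · exact le_max_of_le_left (by nlinarith [ht.1.le])
    · exact le_max_of_le_right (by nlinarith [ht.2])
  have hcont : ∀ n : ℕ, Continuous fun t : ℝ => (-1 : ℝ) ^ n * t ^ (2 * n) / (2 ^ n * n.factorial) := by
    intro n; fun_prop
  have hint : ∀ n : ℕ, Integrable (fun t : ℝ => (-1 : ℝ) ^ n * t ^ (2 * n) / (2 ^ n * n.factorial))
      (volume.restrict (Set.Ioc a b)) := by
    intro n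
    exact (hcont n).integrableOn_Ioc
  have hptbd : ∀ n : ℕ, ∀ t ∈ Set.Ioc a b,
      ‖(-1 : ℝ) ^ n * t ^ (2 * n) / (2 ^ n * n.factorial)‖ ≤ (K / 2) ^ n / n.factorial := by
    intro n t ht
    have h1 : t ^ (2 * n) = (t ^ 2) ^ n := by rw [← pow_mul]
    have h2 : (t ^ 2) ^ n ≤ K ^ n := pow_le_pow_left₀ (sq_nonneg t) (hsq t ht) n
    have h3 : (0:ℝ) < 2 ^ n * n.factorial := by positivity
    rw [norm_div, norm_mul, norm_pow, norm_pow, norm_neg, norm_one, one_pow, one_mul]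
    rw [Real.norm_of_nonneg (by positivity : (0:ℝ) ≤ (2:ℝ) ^ n * n.factorial)]
    have h4 : ‖t‖ ^ (2 * n) ≤ K ^ n := by
      rw [Real.norm_eq_abs, ← sq_abs] at *
      calc |t| ^ (2 * n) = (|t| ^ 2) ^ n := by rw [← pow_mul]
        _ ≤ K ^ n := h2
    have h5 : (K / 2) ^ n / (n.factorial : ℝ) = K ^ n / (2 ^ n * n.factorial) := by
      rw [div_pow]; field_simp
    rw [h5]
    gcongr
  have hswap := MeasureTheory.integral_tsum_of_summable_integral_norm
    (F := fun n : ℕ => fun t : ℝ => (-1 : ℝ) ^ n * t ^ (2 * n) / (2 ^ n * n.factorial))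
    (μ := volume.restrict (Set.Ioc a b)) hint ?_
  · exact hswap.symm
  · refine Summable.of_nonneg_of_le (fun n => integral_nonneg fun t => norm_nonneg _)
      (fun n => ?_) ((Real.summable_pow_div_factorial (K / 2)).mul_left (b - a))
    calc ∫ t in Set.Ioc a b, ‖(-1 : ℝ) ^ n * t ^ (2 * n) / (2 ^ n * n.factorial)‖
        ≤ ∫ _ in Set.Ioc a b, (K / 2) ^ n / (n.factorial : ℝ) := by
          apply integral_mono_of_nonneg
          · exact Filter.Eventually.of_forall fun t => norm_nonneg _
          · exact integrable_const _
          · filter_upwards [MeasureTheory.ae_restrict_mem measurableSet_Ioc] with t ht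
            exact hptbd n t ht
      _ = (b - a) * ((K / 2) ^ n / n.factorial) := by
          rw [MeasureTheory.setIntegral_const, Real.volume_real_Ioc_of_le hab, smul_eq_mul]

lemma term_integral (x : ℝ) (n : ℕ) :
    ∫ t in (0:ℝ)..x, (-1 : ℝ) ^ n * t ^ (2 * n) / (2 ^ n * n.factorial) =
      (-1 : ℝ) ^ n * x ^ (2 * n + 1) / (2 ^ n * n.factorial * (2 * n + 1)) := by
  have h : ∀ t : ℝ, (-1 : ℝ) ^ n * t ^ (2 * n) / (2 ^ n * n.factorial) =
      ((-1 : ℝ) ^ n / (2 ^ n * n.factorial)) * t ^ (2 * n) := fun t => by ring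
  simp_rw [h]
  rw [intervalIntegral.integral_const_mul, integral_pow]
  have hne : ((2 * n : ℕ) : ℝ) + 1 ≠ 0 := by positivity
  field_simp
  rw [zero_pow (by omega), sub_zero]; push_cast; ring

lemma F_series (x : ℝ) :
    ∫ t in (0:ℝ)..x, Real.exp (-t ^ 2 / 2) =
      ∑' n : ℕ, (-1 : ℝ) ^ n * x ^ (2 * n + 1) / (2 ^ n * n.factorial * (2 * n + 1)) := by
  rcases le_total 0 x with h | h
  · rw [intervalIntegral.integral_of_le h]
    simp_rw [exp_neg_sq_series]
    rw [swap_aux 0 x h]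
    refine tsum_congr fun n => ?_
    rw [← intervalIntegral.integral_of_le h, term_integral]
  · rw [intervalIntegral.integral_of_ge h]
    simp_rw [exp_neg_sq_series]
    rw [swap_aux x 0 h, ← tsum_neg]
    refine tsum_congr fun n => ?_
    rw [← intervalIntegral.integral_of_le h, ← intervalIntegral.integral_symm, term_integral]

lemma gaussQ_eq (x : ℝ) :
    gaussQ x = 1 / 2 - (Real.sqrt (2 * π))⁻¹ * ∫ t in (0:ℝ)..x, Real.exp (-t ^ 2 / 2) := by
  have hs : (0:ℝ) < Real.sqrt (2 * π) := Real.sqrt_pos.mpr (by positivity)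
  have h1 : (∫ t in Set.Iic x, Real.exp (-t ^ 2 / 2)) + ∫ t in Set.Ioi x, Real.exp (-t ^ 2 / 2)
      = Real.sqrt (2 * π) := by
    rw [intervalIntegral.integral_Iic_add_Ioi integrable_exp_half.integrableOn
      integrable_exp_half.integrableOn, integral_exp_half]
  have h2 : (∫ t in Set.Iic x, Real.exp (-t ^ 2 / 2)) - ∫ t in Set.Iic (0:ℝ), Real.exp (-t ^ 2 / 2)
      = ∫ t in (0:ℝ)..x, Real.exp (-t ^ 2 / 2) :=
    intervalIntegral.integral_Iic_sub_Iic integrable_exp_half.integrableOn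
      integrable_exp_half.integrableOn
  rw [integral_exp_half_Iic] at h2
  unfold gaussQ
  have h3 : ∫ t in Set.Ioi x, Real.exp (-t ^ 2 / 2) =
      Real.sqrt (2 * π) / 2 - ∫ t in (0:ℝ)..x, Real.exp (-t ^ 2 / 2) := by linarith
  rw [h3]
  have h4 : (Real.sqrt (2 * π))⁻¹ * (Real.sqrt (2 * π) / 2) = 1 / 2 := by
    field_simp
  rw [mul_sub, h4]

lemma gaussQ_series (x : ℝ) :
    gaussQ x = 1 / 2 - (Real.sqrt (2 * π))⁻¹ *
      ∑' n : ℕ, (-1 : ℝ) ^ n * x ^ (2 * n + 1) / (2 ^ n * n.factorial * (2 * n + 1)) := by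
  rw [gaussQ_eq, F_series]

lemma gaussQ_continuous : Continuous gaussQ := by
  have h : gaussQ = fun x => 1 / 2 - (Real.sqrt (2 * π))⁻¹ * ∫ t in (0:ℝ)..x, Real.exp (-t ^ 2 / 2) :=
    funext gaussQ_eq
  rw [h]
  exact continuous_const.sub (continuous_const.mul
    (intervalIntegral.continuous_primitive (fun a b => integrable_exp_half.intervalIntegrable) 0))

lemma gaussQ_abs_le (x : ℝ) : |gaussQ x| ≤ 1 := by
  have hs : (0:ℝ) < Real.sqrt (2 * π) := Real.sqrt_pos.mpr (by positivity)
  have h0 : 0 ≤ ∫ t in Set.Ioi x, Real.exp (-t ^ 2 / 2) :=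
    MeasureTheory.setIntegral_nonneg measurableSet_Ioi fun t _ => (Real.exp_pos _).le
  have h1 : (∫ t in Set.Ioi x, Real.exp (-t ^ 2 / 2)) ≤ Real.sqrt (2 * π) := by
    rw [← integral_exp_half]
    exact MeasureTheory.setIntegral_le_integral integrable_exp_half
      (Filter.Eventually.of_forall fun t => (Real.exp_pos _).le)
  unfold gaussQ
  rw [abs_mul, abs_of_nonneg (inv_nonneg.mpr hs.le), abs_of_nonneg h0]
  rw [inv_mul_le_iff₀ hs]
  linarith

lemma fact_two_mul_eq (n : ℕ) :
    (2 * n).factorial = 2 ^ n * n.factorial * (2 * n - 1).doubleFactorial := by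
  cases n with
  | zero => rfl
  | succ m =>
    rw [show 2 * (m + 1) = (2 * m + 1) + 1 by ring, Nat.factorial_eq_mul_doubleFactorial,
      show (2 * m + 1) + 1 = 2 * (m + 1) by ring, Nat.doubleFactorial_two_mul,
      show 2 * (m + 1) - 1 = 2 * m + 1 by omega]

lemma dfact_nat (n k j : ℕ) (hk : k ≤ 2 * n + 1) (hj : j ≤ k) :
    (2 * n - 1).doubleFactorial * (2 ^ n * n.factorial * (2 * n + 1)) =
      (2 * n + 1).choose k * k.choose j *
        ((2 * n + 1 - k).factorial * (j.factorial * (k - j).factorial)) := by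
  have h1 := Nat.choose_mul_factorial_mul_factorial hj
  have h2 := Nat.choose_mul_factorial_mul_factorial hk
  have h3 : (2 * n - 1).doubleFactorial * (2 ^ n * n.factorial * (2 * n + 1)) =
      (2 * n + 1).factorial := by
    rw [show (2 * n + 1) = (2 * n) + 1 from rfl, Nat.factorial_succ, fact_two_mul_eq]
    ring
  have h4 : (2 * n + 1).choose k * k.choose j *
      ((2 * n + 1 - k).factorial * (j.factorial * (k - j).factorial)) =
      (2 * n + 1).choose k * k.factorial * (2 * n + 1 - k).factorial := by
    rw [← h1]; ring
  rw [h3, h4, h2]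

lemma keyterm (n k j : ℕ) (hk : k ≤ 2 * n + 1) (hj : j ≤ k) (σ g m cj : ℝ) (hσ : σ ≠ 0) :
    ((-1 : ℝ) ^ n / (2 ^ n * n.factorial * (2 * n + 1) * σ ^ (2 * n + 1))) *
      (((2 * n + 1).choose k : ℝ) * (k.choose j : ℝ) * g ^ (2 * n + 1 - k) * (-1 : ℝ) ^ k *
        m ^ (k - j) * cj) =
    σ⁻¹ * (((2 * n - 1).doubleFactorial : ℝ) * g ^ (2 * n + 1 - k) * (-1 : ℝ) ^ (n + k) * cj *
        m ^ (k - j) /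
      (σ ^ (2 * n) * ((2 * n + 1 - k).factorial : ℝ) * (j.factorial : ℝ) *
        ((k - j).factorial : ℝ))) := by
  have hR : ((2 * n - 1).doubleFactorial : ℝ) * (2 ^ n * n.factorial * (2 * n + 1)) =
      ((2 * n + 1).choose k : ℝ) * (k.choose j : ℝ) *
        (((2 * n + 1 - k).factorial : ℝ) * ((j.factorial : ℝ) * ((k - j).factorial : ℝ))) := by
    exact_mod_cast dfact_nat n k j hk hj
  have f1 : ((2 * n + 1 - k).factorial : ℝ) ≠ 0 := Nat.cast_ne_zero.mpr (Nat.factorial_ne_zero _)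
  have f2 : (j.factorial : ℝ) ≠ 0 := Nat.cast_ne_zero.mpr (Nat.factorial_ne_zero _)
  have f3 : ((k - j).factorial : ℝ) ≠ 0 := Nat.cast_ne_zero.mpr (Nat.factorial_ne_zero _)
  have f4 : (n.factorial : ℝ) ≠ 0 := Nat.cast_ne_zero.mpr (Nat.factorial_ne_zero _)
  have f5 : ((2 : ℝ) ^ n) ≠ 0 := by positivity
  have f6 : ((2 * n + 1 : ℕ) : ℝ) ≠ 0 := by positivity
  have f7 : (2 * (n:ℝ) + 1) ≠ 0 := by positivity
  rw [pow_add, pow_succ]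
  field_simp
  linear_combination (-(1:ℝ) * (-1:ℝ)^n * (-1)^k * g ^ (2*n+1-k) * m^(k-j) * cj) * hR

/-- Series expansion of `E[Q((g - I)/σ)]` in terms of the mean `m` and central
moments `cm j` of the bounded random variable `I`:
`E[Q((g-I)/σ)] = 1/2 - (1/(√(2π)σ)) ∑_n ∑_{k≤2n+1} ∑_{j≤k}
  (2n-1)!! g^{2n+1-k} (-1)^{n+k} μ_j μ^{k-j} / (σ^{2n}(2n+1-k)! j! (k-j)!)`. -/
theorem expectation_gaussQ_series (Ω : Type*) [MeasurableSpace Ω] (μ : Measure Ω)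
    [IsProbabilityMeasure μ] (I : Ω → ℝ) (hI : Measurable I)
    (C : ℝ) (hbdd : ∀ ω, |I ω| ≤ C) (g σ : ℝ) (hg : 0 < g) (hσ : 0 < σ) :
    (Summable fun n : ℕ => ∑ k ∈ Finset.range (2 * n + 2), ∑ j ∈ Finset.range (k + 1),
        ((2 * n - 1).doubleFactorial : ℝ) * g ^ (2 * n + 1 - k) * (-1 : ℝ) ^ (n + k) *
          (∫ ω, (I ω - ∫ ω', I ω' ∂μ) ^ j ∂μ) * (∫ ω', I ω' ∂μ) ^ (k - j) /
          (σ ^ (2 * n) * ((2 * n + 1 - k).factorial : ℝ) * (j.factorial : ℝ) *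
            ((k - j).factorial : ℝ))) ∧
    ∫ ω, gaussQ ((g - I ω) / σ) ∂μ =
      1 / 2 - (1 / (Real.sqrt (2 * π) * σ)) *
        ∑' n : ℕ, ∑ k ∈ Finset.range (2 * n + 2), ∑ j ∈ Finset.range (k + 1),
          ((2 * n - 1).doubleFactorial : ℝ) * g ^ (2 * n + 1 - k) * (-1 : ℝ) ^ (n + k) *
            (∫ ω, (I ω - ∫ ω', I ω' ∂μ) ^ j ∂μ) * (∫ ω', I ω' ∂μ) ^ (k - j) /
            (σ ^ (2 * n) * ((2 * n + 1 - k).factorial : ℝ) * (j.factorial : ℝ) *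
              ((k - j).factorial : ℝ)) := by
  have hΩ : Nonempty Ω := by
    by_contra h
    rw [not_nonempty_iff] at h
    have h1 : μ Set.univ = 1 := measure_univ
    rw [Set.univ_eq_empty_iff.mpr h, measure_empty] at h1
    exact zero_ne_one h1
  have hC : 0 ≤ C := le_trans (abs_nonneg _) (hbdd (Classical.arbitrary Ω))
  have hσ' : σ ≠ 0 := ne_of_gt hσ
  set m : ℝ := ∫ ω', I ω' ∂μ with hm
  set M : ℝ := (g + C) / σ with hMdef
  have hM0 : 0 < M := div_pos (by linarith) hσ
  have hIbd : ∀ ω, -C ≤ I ω ∧ I ω ≤ C := fun ω => abs_le.mp (hbdd ω)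
  have hxbd : ∀ ω, |(g - I ω) / σ| ≤ M := by
    intro ω
    rw [abs_div, abs_of_pos hσ, hMdef]
    gcongr
    exact abs_le.mpr ⟨by linarith [(hIbd ω).2], by linarith [(hIbd ω).1]⟩
  set c : ℝ := (Real.sqrt (2 * π))⁻¹ with hc
  have hs0 : (0:ℝ) < Real.sqrt (2 * π) := Real.sqrt_pos.mpr (by positivity)
  set T : ℕ → Ω → ℝ := fun n ω =>
    (-1 : ℝ) ^ n * ((g - I ω) / σ) ^ (2 * n + 1) / (2 ^ n * n.factorial * (2 * n + 1)) with hT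
  set B : ℕ → ℝ := fun n => M * ((M ^ 2 / 2) ^ n / n.factorial) with hB
  have hBsum : Summable B := (Real.summable_pow_div_factorial (M ^ 2 / 2)).mul_left M
  have hTbd : ∀ n ω, ‖T n ω‖ ≤ B n := by
    intro n ω
    have hD : (0:ℝ) < 2 ^ n * n.factorial * (2 * n + 1) := by positivity
    have h1 : ‖T n ω‖ = |(g - I ω) / σ| ^ (2 * n + 1) / (2 ^ n * n.factorial * (2 * n + 1)) := by
      rw [hT, Real.norm_eq_abs, abs_div, abs_mul, abs_pow, abs_neg, abs_one, one_pow, one_mul,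
        abs_pow, abs_of_pos hD]
    rw [h1]
    have h2 : |(g - I ω) / σ| ^ (2 * n + 1) ≤ M ^ (2 * n + 1) :=
      pow_le_pow_left₀ (abs_nonneg _) (hxbd ω) _
    have h3 : M ^ (2 * n + 1) / (2 ^ n * n.factorial * (2 * n + 1)) ≤
        M ^ (2 * n + 1) / (2 ^ n * n.factorial) := by
      have hD2 : (0:ℝ) < 2 ^ n * n.factorial := by positivity
      apply div_le_div_of_nonneg_left (by positivity) hD2
      nlinarith [hD2, Nat.cast_nonneg (α := ℝ) n]
    have h4 : M ^ (2 * n + 1) / (2 ^ n * n.factorial) = B n := by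
      have key : ∀ x : ℝ, x ^ (2 * n + 1) / (2 ^ n * n.factorial) =
          x * ((x ^ 2 / 2) ^ n / n.factorial) := fun x => by rw [div_pow, ← pow_mul]; ring
      exact key M
    calc |(g - I ω) / σ| ^ (2 * n + 1) / (2 ^ n * n.factorial * (2 * n + 1))
        ≤ M ^ (2 * n + 1) / (2 ^ n * n.factorial * (2 * n + 1)) := by gcongr
      _ ≤ M ^ (2 * n + 1) / (2 ^ n * n.factorial) := h3
      _ = B n := h4
  have hxmeas : Measurable fun ω => (g - I ω) / σ := (measurable_const.sub hI).div_const σ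
  have hTmeas : ∀ n, Measurable (T n) := by
    intro n
    rw [hT]
    exact (((hxmeas.pow_const (2 * n + 1)).const_mul ((-1:ℝ)^n)).div_const _)
  have hTint : ∀ n, Integrable (T n) μ := fun n =>
    Integrable.mono' (integrable_const (B n)) (hTmeas n).aestronglyMeasurable
      (Filter.Eventually.of_forall (hTbd n))
  have hint_norm : ∀ n, ∫ ω, ‖T n ω‖ ∂μ ≤ B n := by
    intro n
    calc ∫ ω, ‖T n ω‖ ∂μ ≤ ∫ _, B n ∂μ :=
          integral_mono_of_nonneg (Filter.Eventually.of_forall fun ω => norm_nonneg _)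
            (integrable_const _) (Filter.Eventually.of_forall (hTbd n))
      _ = B n := by simp
  have hsumnorm : Summable fun n => ∫ ω, ‖T n ω‖ ∂μ :=
    Summable.of_nonneg_of_le (fun n => integral_nonneg fun ω => norm_nonneg _) hint_norm hBsum
  have hswap : ∫ ω, (∑' n, T n ω) ∂μ = ∑' n, ∫ ω, T n ω ∂μ :=
    (integral_tsum_of_summable_integral_norm hTint hsumnorm).symm
  have hsumint : Summable fun n => ∫ ω, T n ω ∂μ :=
    Summable.of_norm_bounded hBsum fun n =>
      (norm_integral_le_integral_norm _).trans (hint_norm n)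
  have hgq : ∀ ω, gaussQ ((g - I ω) / σ) = 1 / 2 - c * ∑' n, T n ω := fun ω =>
    gaussQ_series ((g - I ω) / σ)
  have hSdef : (fun ω => ∑' n, T n ω) =
      fun ω => Real.sqrt (2 * π) * (1 / 2 - gaussQ ((g - I ω) / σ)) := by
    funext ω
    rw [hgq ω, sub_sub_cancel, hc, ← mul_assoc, mul_inv_cancel₀ (ne_of_gt hs0), one_mul]
  have hQmeas : Measurable fun ω => gaussQ ((g - I ω) / σ) :=
    gaussQ_continuous.measurable.comp hxmeas
  have hQint : Integrable (fun ω => gaussQ ((g - I ω) / σ)) μ :=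
    Integrable.mono' (integrable_const 1) hQmeas.aestronglyMeasurable
      (Filter.Eventually.of_forall fun ω => by
        rw [Real.norm_eq_abs]; exact gaussQ_abs_le _)
  have hSint : Integrable (fun ω => ∑' n, T n ω) μ := by
    rw [hSdef]
    exact ((integrable_const _).sub hQint).const_mul _
  have hmain : ∫ ω, gaussQ ((g - I ω) / σ) ∂μ = 1 / 2 - c * ∑' n, ∫ ω, T n ω ∂μ := by
    calc ∫ ω, gaussQ ((g - I ω) / σ) ∂μ = ∫ ω, (1 / 2 - c * ∑' n, T n ω) ∂μ :=
          integral_congr_ae (Filter.Eventually.of_forall hgq)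
      _ = (∫ _, (1/2 : ℝ) ∂μ) - ∫ ω, c * ∑' n, T n ω ∂μ :=
          integral_sub (integrable_const _) (hSint.const_mul c)
      _ = 1 / 2 - c * ∑' n, ∫ ω, T n ω ∂μ := by
          rw [integral_const, probReal_univ, integral_const_mul, hswap]
          simp
  have hcmint : ∀ j : ℕ, Integrable (fun ω => (I ω - m) ^ j) μ := by
    intro j
    refine Integrable.mono' (integrable_const ((C + |m|) ^ j))
      ((hI.sub_const m).pow_const j).aestronglyMeasurable
      (Filter.Eventually.of_forall fun ω => ?_)
    rw [Real.norm_eq_abs, abs_pow]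
    refine pow_le_pow_left₀ (abs_nonneg _) ?_ j
    exact abs_le.mpr ⟨by linarith [(hIbd ω).1, le_abs_self m],
      by linarith [(hIbd ω).2, neg_abs_le m]⟩
  have hGint : ∀ p : ℕ, Integrable (fun ω => (g - I ω) ^ p) μ := by
    intro p
    refine Integrable.mono' (integrable_const ((g + C) ^ p))
      ((measurable_const.sub hI).pow_const p).aestronglyMeasurable
      (Filter.Eventually.of_forall fun ω => ?_)
    rw [Real.norm_eq_abs, abs_pow]
    refine pow_le_pow_left₀ (abs_nonneg _) ?_ p
    exact abs_le.mpr ⟨by linarith [(hIbd ω).2], by linarith [(hIbd ω).1]⟩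
  have hkey : ∀ n : ℕ, ∫ ω, T n ω ∂μ =
      σ⁻¹ * ∑ k ∈ Finset.range (2 * n + 2), ∑ j ∈ Finset.range (k + 1),
        ((2 * n - 1).doubleFactorial : ℝ) * g ^ (2 * n + 1 - k) * (-1 : ℝ) ^ (n + k) *
          (∫ ω, (I ω - m) ^ j ∂μ) * m ^ (k - j) /
          (σ ^ (2 * n) * ((2 * n + 1 - k).factorial : ℝ) * (j.factorial : ℝ) *
            ((k - j).factorial : ℝ)) := by
    intro n
    have hexp : ∀ x : ℝ, (g - x) ^ (2 * n + 1) =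
        ∑ k ∈ Finset.range (2 * n + 2), ∑ j ∈ Finset.range (k + 1),
          (((2 * n + 1).choose k : ℝ) * (k.choose j : ℝ) * g ^ (2 * n + 1 - k) *
            (-1 : ℝ) ^ k * m ^ (k - j)) * (x - m) ^ j := by
      intro x
      rw [show g - x = (-x) + g by ring, add_pow]
      refine Finset.sum_congr rfl fun k hk => ?_
      have hx : x ^ k = ∑ j ∈ Finset.range (k + 1), (x - m) ^ j * m ^ (k - j) *
          (k.choose j : ℝ) := by
        conv_lhs => rw [show x = (x - m) + m by ring]
        rw [add_pow]
      rw [neg_pow, hx, Finset.mul_sum, Finset.sum_mul, Finset.sum_mul]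
      exact Finset.sum_congr rfl fun j hj => by ring
    have hTrw : T n = fun ω =>
        ((-1 : ℝ) ^ n / (2 ^ n * n.factorial * (2 * n + 1) * σ ^ (2 * n + 1))) *
          (g - I ω) ^ (2 * n + 1) := by
      funext ω
      simp only [hT]
      have hD : ((2:ℝ) ^ n * n.factorial * (2 * (n:ℝ) + 1)) ≠ 0 := by positivity
      rw [div_pow]
      field_simp
    rw [hTrw, integral_const_mul]
    have hbig : ∫ ω, (g - I ω) ^ (2 * n + 1) ∂μ =
        ∑ k ∈ Finset.range (2 * n + 2), ∑ j ∈ Finset.range (k + 1),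
          (((2 * n + 1).choose k : ℝ) * (k.choose j : ℝ) * g ^ (2 * n + 1 - k) *
            (-1 : ℝ) ^ k * m ^ (k - j)) * ∫ ω, (I ω - m) ^ j ∂μ := by
      calc ∫ ω, (g - I ω) ^ (2 * n + 1) ∂μ
          = ∫ ω, (∑ k ∈ Finset.range (2 * n + 2), ∑ j ∈ Finset.range (k + 1),
              (((2 * n + 1).choose k : ℝ) * (k.choose j : ℝ) * g ^ (2 * n + 1 - k) *
                (-1 : ℝ) ^ k * m ^ (k - j)) * (I ω - m) ^ j) ∂μ :=
            integral_congr_ae (Filter.Eventually.of_forall fun ω => hexp (I ω))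
        _ = _ := by
            rw [integral_finset_sum _ fun k _ =>
              integrable_finset_sum _ fun j _ => (hcmint j).const_mul _]
            refine Finset.sum_congr rfl fun k hk => ?_
            rw [integral_finset_sum _ fun j _ => (hcmint j).const_mul _]
            exact Finset.sum_congr rfl fun j hj => integral_const_mul _ _
    rw [hbig, Finset.mul_sum, Finset.mul_sum]
    refine Finset.sum_congr rfl fun k hk => ?_
    rw [Finset.mul_sum, Finset.mul_sum]
    refine Finset.sum_congr rfl fun j hj => ?_
    have hk' : k ≤ 2 * n + 1 := Nat.lt_succ_iff.mp (Finset.mem_range.mp hk)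
    have hj' : j ≤ k := Nat.lt_succ_iff.mp (Finset.mem_range.mp hj)
    exact keyterm n k j hk' hj' σ g m (∫ ω, (I ω - m) ^ j ∂μ) hσ'
  have hfun : (fun n : ℕ => ∑ k ∈ Finset.range (2 * n + 2), ∑ j ∈ Finset.range (k + 1),
      ((2 * n - 1).doubleFactorial : ℝ) * g ^ (2 * n + 1 - k) * (-1 : ℝ) ^ (n + k) *
        (∫ ω, (I ω - m) ^ j ∂μ) * m ^ (k - j) /
        (σ ^ (2 * n) * ((2 * n + 1 - k).factorial : ℝ) * (j.factorial : ℝ) *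
          ((k - j).factorial : ℝ))) = fun n => σ * ∫ ω, T n ω ∂μ := by
    funext n
    rw [hkey n, ← mul_assoc, mul_inv_cancel₀ hσ', one_mul]
  constructor
  · rw [hfun]
    exact hsumint.mul_left σ
  · rw [hmain, hfun, tsum_mul_left, hc]
    have hX : (1 / (Real.sqrt (2 * π) * σ)) * (σ * ∑' n, ∫ ω, T n ω ∂μ) =
        (Real.sqrt (2 * π))⁻¹ * ∑' n, ∫ ω, T n ω ∂μ := by
      field_simp
    rw [hX]
end
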